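/- Key restriction lemma from the proof of the PNS(k) lower bounds: for every i ∈ {1,…,k}, the probability of the joint counterfactual event restricted to treatment x_i satisfies P(⋂_{j=1}^{k} {Y_j = j} ∩ {X = i}) ≥ Σ_{1 ≤ j ≤ k, j ≠ i} [ P(Y_j = j) + P(X = j) − P(X = j, Y = j) ] + P(X = i, Y = i) − k + 1. -/

import Mathlib

open MeasureTheory

lemma two_set_bonf {Ω : Type*} [MeasurableSpace Ω] (P : Measure Ω) [IsProbabilityMeasure P]
    {A B : Set Ω} (hA : MeasurableSet A) (hB : MeasurableSet B) :
    (P A).toReal + (P B).toReal - 1 ≤ (P (A ∩ B)).toReal := by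
  have h := measure_union_add_inter (μ := P) A hB
  have hu : P (A ∪ B) ≤ 1 := prob_le_one
  have hfin : ∀ s : Set Ω, P s ≠ ⊤ := fun s => measure_ne_top P s
  have h' : (P (A ∪ B)).toReal + (P (A ∩ B)).toReal = (P A).toReal + (P B).toReal := by
    rw [← ENNReal.toReal_add (hfin _) (hfin _), ← ENNReal.toReal_add (hfin _) (hfin _), h]
  have hu' : (P (A ∪ B)).toReal ≤ 1 := by
    simpa using ENNReal.toReal_mono (by norm_num) hu
  linarith

lemma bonferroni {Ω : Type*} [MeasurableSpace Ω] (P : Measure Ω) [IsProbabilityMeasure P]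
    (s : Finset ℕ) (A : ℕ → Set Ω) (hA : ∀ j ∈ s, MeasurableSet (A j)) :
    ∑ j ∈ s, (P (A j)).toReal - (s.card : ℝ) + 1 ≤ (P (⋂ j ∈ s, A j)).toReal := by
  induction s using Finset.induction_on with
  | empty => simp
  | @insert a s ha ih =>
    have hAa : MeasurableSet (A a) := hA a (Finset.mem_insert_self a s)
    have hAs : ∀ j ∈ s, MeasurableSet (A j) := fun j hj => hA j (Finset.mem_insert_of_mem hj)
    have hin : MeasurableSet (⋂ j ∈ s, A j) :=
      MeasurableSet.biInter s.countable_toSet (fun j hj => hAs j hj)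
    have h2 := two_set_bonf P hAa hin
    have ih' := ih hAs
    rw [Finset.set_biInter_insert, Finset.sum_insert ha, Finset.card_insert_of_notMem ha]
    push_cast
    linarith

theorem pns_k_restriction_lemma
    {Ω : Type*} [MeasurableSpace Ω] (P : Measure Ω) [IsProbabilityMeasure P]
    (n k : ℕ) (hk1 : 1 ≤ k) (hkn : k ≤ n)
    (X : Ω → ℕ) (Y : ℕ → Ω → ℕ) (Yobs : Ω → ℕ)
    (hX : Measurable X) (hY : ∀ j, Measurable (Y j))
    (hXr : ∀ ω, X ω ∈ Finset.Icc 1 n)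
    (hYr : ∀ j ω, Y j ω ∈ Finset.Icc 1 n)
    (hcons : ∀ ω, Yobs ω = Y (X ω) ω) :
    ∀ i ∈ Finset.Icc 1 k,
      (∑ j ∈ (Finset.Icc 1 k).erase i,
          ((P {ω | Y j ω = j}).toReal + (P {ω | X ω = j}).toReal - (P {ω | X ω = j ∧ Yobs ω = j}).toReal))
        + (P {ω | X ω = i ∧ Yobs ω = i}).toReal - (k : ℝ) + 1 ≤ (P ((⋂ j ∈ Finset.Icc 1 k, {ω | Y j ω = j}) ∩ {ω | X ω = i})).toReal := by
  intro i hi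
  -- key set identity: {X = j ∧ Yobs = j} = {X = j} ∩ {Y j = j}
  have hkey : ∀ j, {ω | X ω = j ∧ Yobs ω = j} = {ω | X ω = j} ∩ {ω | Y j ω = j} := by
    intro j
    ext ω
    simp only [Set.mem_setOf_eq, Set.mem_inter_iff, hcons ω]
    constructor
    · rintro ⟨h1, h2⟩; exact ⟨h1, by rwa [h1] at h2⟩
    · rintro ⟨h1, h2⟩; exact ⟨h1, by rwa [h1]⟩
  have hYm : ∀ j, MeasurableSet {ω | Y j ω = j} := fun j => (hY j) (measurableSet_singleton j)
  have hXm : ∀ j, MeasurableSet {ω | X ω = j} := fun j => hX (measurableSet_singleton j)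
  -- family
  set A : ℕ → Set Ω := fun j =>
    if j = i then {ω | X ω = i} ∩ {ω | Y i ω = i} else {ω | Y j ω = j} ∪ {ω | X ω = j} with hAdef
  have hAm : ∀ j ∈ Finset.Icc 1 k, MeasurableSet (A j) := by
    intro j _
    by_cases h : j = i
    · simp only [hAdef, if_pos h]; exact (hXm i).inter (hYm i)
    · simp only [hAdef, if_neg h]; exact (hYm j).union (hXm j)
  have hbonf := bonferroni P (Finset.Icc 1 k) A hAm
  -- subset: ⋂ A ⊆ target
  have hsub : (⋂ j ∈ Finset.Icc 1 k, A j) ⊆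
      (⋂ j ∈ Finset.Icc 1 k, {ω | Y j ω = j}) ∩ {ω | X ω = i} := by
    intro ω hω
    simp only [Set.mem_iInter] at hω
    have hXi : X ω = i := by
      have := hω i hi
      simp only [hAdef, if_pos rfl] at this
      exact this.1
    refine ⟨?_, hXi⟩
    simp only [Set.mem_iInter]
    intro j hj
    have := hω j hj
    by_cases h : j = i
    · subst h; simp only [hAdef, if_pos rfl] at this; exact this.2
    · simp only [hAdef, if_neg h] at this
      rcases this with h1 | h1
      · exact h1
      · exact absurd (hXi ▸ h1 : (i : ℕ) = j) (fun e => h e.symm)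
  have hmono : (P (⋂ j ∈ Finset.Icc 1 k, A j)).toReal ≤
      (P ((⋂ j ∈ Finset.Icc 1 k, {ω | Y j ω = j}) ∩ {ω | X ω = i})).toReal :=
    ENNReal.toReal_mono (measure_ne_top P _) (measure_mono hsub)
  -- sum decomposition
  have hsum : ∑ j ∈ Finset.Icc 1 k, (P (A j)).toReal =
      (∑ j ∈ (Finset.Icc 1 k).erase i,
          ((P {ω | Y j ω = j}).toReal + (P {ω | X ω = j}).toReal - (P {ω | X ω = j ∧ Yobs ω = j}).toReal))
        + (P {ω | X ω = i ∧ Yobs ω = i}).toReal := by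
    rw [← Finset.add_sum_erase _ _ hi, add_comm]
    congr 1
    · refine Finset.sum_congr rfl (fun j hj => ?_)
      have hji : j ≠ i := Finset.ne_of_mem_erase hj
      have hpie := measure_union_add_inter (μ := P) {ω | Y j ω = j} (hXm j)
      have hfin : ∀ s : Set Ω, P s ≠ ⊤ := fun s => measure_ne_top P s
      have : (P ({ω | Y j ω = j} ∪ {ω | X ω = j})).toReal
          + (P ({ω | Y j ω = j} ∩ {ω | X ω = j})).toReal
          = (P {ω | Y j ω = j}).toReal + (P {ω | X ω = j}).toReal := by
        rw [← ENNReal.toReal_add (hfin _) (hfin _), ← ENNReal.toReal_add (hfin _) (hfin _), hpie]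
      simp only [hAdef, if_neg hji]
      rw [hkey j, Set.inter_comm]
      linarith
    · simp only [hAdef, if_pos rfl]
      rw [hkey i]
  have hcard : ((Finset.Icc 1 k).card : ℝ) = (k : ℝ) := by
    have : (Finset.Icc 1 k).card = k := by rw [Nat.card_Icc]; omega
    exact_mod_cast congrArg (Nat.cast : ℕ → ℝ) this
  rw [hsum, hcard] at hbonf
  linarith
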